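/- arXiv:2502.03902 — 2 statements merged into one kernel-verified Lean document; each statement's English description precedes it below -/
import Mathlib

section
/- For the flocking system, along any solution of the closed-loop system with the stabilizing control u*_i = m_i (ẋ₄ - ż₄)⁻¹ [g(ẋ₄ - ẋ_i) - (ẋ₄ż_i - ẋ_iż₄)] (i = 1,2,3), the functions φᵇ(t) = ẋ₄(t)żᵇ(t) - ẋᵇ(t)ż₄(t) satisfy φᵇ(t) = φᵇ(0) e^{-t}, provided ẋ₄(t) ≠ ż₄(t) along the trajectory. -/
lemma exp_decay_of_deriv (f : ℝ → ℝ) (hf : ∀ t, HasDerivAt f (-f t) t) :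
    ∀ t, f t = f 0 * Real.exp (-t) := by
  have key : ∀ t, f t * Real.exp t = f 0 := by
    have hderiv : ∀ t, HasDerivAt (fun s => f s * Real.exp s) 0 t := by
      intro t
      have := (hf t).mul (Real.hasDerivAt_exp t)
      exact this.congr_deriv (by ring)
    intro t
    have hconst := is_const_of_deriv_eq_zero
      (f := fun s => f s * Real.exp s)
      (fun s => (hderiv s).differentiableAt)
      (fun s => (hderiv s).deriv) t 0
    simpa using hconst
  intro t
  have h := key t
  have : f t = f 0 / Real.exp t := by
    field_simp at h ⊢; linarith
  rw [this, Real.exp_neg, div_eq_mul_inv]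

/-- Flocking example: with the stabilizing control law
`u*_i = m_i (ẋ₄ - ż₄)⁻¹ [g(ẋ₄ - ẋ_i) - (ẋ₄ż_i - ẋ_iż₄)]` (unit gains),
the constraint functions `φᵇ = ẋ₄żᵇ - ẋᵇż₄` decay as `φᵇ(t) = φᵇ(0) e^{-t}`
along closed-loop trajectories, provided `ẋ₄(t) ≠ ż₄(t)`. -/
theorem stmt8 (mass : Fin 4 → ℝ) (hm : ∀ i, 0 < mass i) (g : ℝ)
    (x z vx vz : Fin 4 → ℝ → ℝ)
    (hx : ∀ i t, HasDerivAt (x i) (vx i t) t)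
    (hz : ∀ i t, HasDerivAt (z i) (vz i t) t)
    (u : Fin 3 → ℝ → ℝ)
    (hu : ∀ (b : Fin 3) (t : ℝ),
      u b t = mass b.castSucc * (vx 3 t - vz 3 t)⁻¹ *
        (g * (vx 3 t - vx b.castSucc t)
          - (vx 3 t * vz b.castSucc t - vx b.castSucc t * vz 3 t)))
    (hax : ∀ (b : Fin 3) (t : ℝ),
      HasDerivAt (vx b.castSucc) (u b t / mass b.castSucc) t)
    (haz : ∀ (b : Fin 3) (t : ℝ),
      HasDerivAt (vz b.castSucc) (u b t / mass b.castSucc - g) t)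
    (hax4 : ∀ t, HasDerivAt (vx 3) 0 t)
    (haz4 : ∀ t, HasDerivAt (vz 3) (-g) t)
    (hne : ∀ t, vx 3 t ≠ vz 3 t) :
    ∀ (t : ℝ) (b : Fin 3),
      vx 3 t * vz b.castSucc t - vx b.castSucc t * vz 3 t
        = (vx 3 0 * vz b.castSucc 0 - vx b.castSucc 0 * vz 3 0) * Real.exp (-t) := by
  intro t b
  set φ : ℝ → ℝ := fun s => vx 3 s * vz b.castSucc s - vx b.castSucc s * vz 3 s with hφ
  have hd : ∀ s, HasDerivAt φ (-φ s) s := by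
    intro s
    have h1 := ((hax4 s).mul (haz b s)).sub ((hax b s).mul (haz4 s))
    have hsne : vx 3 s - vz 3 s ≠ 0 := sub_ne_zero.mpr (hne s)
    have hm' : mass b.castSucc ≠ 0 := (hm b.castSucc).ne'
    have hueq : u b s / mass b.castSucc =
        (vx 3 s - vz 3 s)⁻¹ * (g * (vx 3 s - vx b.castSucc s) - φ s) := by
      rw [hu b s]; field_simp; ring
    have hval : 0 * vz b.castSucc s + vx 3 s * (u b s / mass b.castSucc - g)
        - (u b s / mass b.castSucc * vz 3 s + vx b.castSucc s * (-g)) = -φ s := by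
      rw [hueq]; field_simp; ring
    rw [← hval]; exact h1
  exact exp_decay_of_deriv φ hd t
end

section
/- For the USV system on Q = ℝ² × S¹ with controlled equations mẍ = u sinθ + W¹, mÿ = -u cosθ + W², Iθ̈ = u, where W¹ = m·d(sin²θ C¹ - sinθcosθ C²)(q̇) and W² = m·d(-sinθcosθ C¹ + cos²θ C²)(q̇), the control law û = -m θ̇ (cosθ ẋ + sinθ ẏ) renders the affine constraint φ = sinθ ẋ - cosθ ẏ + cosθ C²(x,y) - sinθ C¹(x,y) = 0 invariant: the closed-loop dynamical vector field Γ satisfies Γ(φ) = 0 identically. -/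
/-- USV example: with the control law `û = -mθ̇(cosθ ẋ + sinθ ẏ)`, the closed-loop
dynamics `mẍ = û sinθ + W¹`, `mÿ = -û cosθ + W²`, `Iθ̈ = û` (where `W¹, W²` are the
time-derivatives along the trajectory of the drift functions) renders the affine
constraint `φ = sinθ ẋ - cosθ ẏ + cosθ C² - sinθ C¹` invariant: `Γ(φ) = 0`. -/
theorem stmt9 (m I : ℝ) (hm : 0 < m) (hI : 0 < I)
    (C1 C2 : ℝ × ℝ → ℝ) (hC1 : Differentiable ℝ C1) (hC2 : Differentiable ℝ C2)
    (x y θ vx vy vθ : ℝ → ℝ)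
    (hx : ∀ t, HasDerivAt x (vx t) t)
    (hy : ∀ t, HasDerivAt y (vy t) t)
    (hθ : ∀ t, HasDerivAt θ (vθ t) t)
    (u W1 W2 : ℝ → ℝ)
    (hu : ∀ t, u t = -m * vθ t * (Real.cos (θ t) * vx t + Real.sin (θ t) * vy t))
    (hW1 : ∀ t, W1 t = m * deriv (fun s =>
      Real.sin (θ s) ^ 2 * C1 (x s, y s)
        - Real.sin (θ s) * Real.cos (θ s) * C2 (x s, y s)) t)
    (hW2 : ∀ t, W2 t = m * deriv (fun s =>
      -(Real.sin (θ s) * Real.cos (θ s)) * C1 (x s, y s)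
        + Real.cos (θ s) ^ 2 * C2 (x s, y s)) t)
    (hax : ∀ t, HasDerivAt vx ((u t * Real.sin (θ t) + W1 t) / m) t)
    (hay : ∀ t, HasDerivAt vy ((-(u t * Real.cos (θ t)) + W2 t) / m) t)
    (haθ : ∀ t, HasDerivAt vθ (u t / I) t) :
    ∀ t, HasDerivAt (fun s =>
      Real.sin (θ s) * vx s - Real.cos (θ s) * vy s
        + Real.cos (θ s) * C2 (x s, y s) - Real.sin (θ s) * C1 (x s, y s)) 0 t := by
  intro t
  have hγ : HasDerivAt (fun s => (x s, y s)) (vx t, vy t) t := (hx t).prodMk (hy t)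
  set a := fderiv ℝ C1 (x t, y t) (vx t, vy t) with ha
  set b := fderiv ℝ C2 (x t, y t) (vx t, vy t) with hb
  have hA : HasDerivAt (fun s => C1 (x s, y s)) a t :=
    ((hC1 (x t, y t)).hasFDerivAt).comp_hasDerivAt t hγ
  have hB : HasDerivAt (fun s => C2 (x s, y s)) b t :=
    ((hC2 (x t, y t)).hasFDerivAt).comp_hasDerivAt t hγ
  have hsin : HasDerivAt (fun s => Real.sin (θ s)) (Real.cos (θ t) * vθ t) t :=
    (Real.hasDerivAt_sin (θ t)).comp t (hθ t)
  have hcos : HasDerivAt (fun s => Real.cos (θ s)) (-Real.sin (θ t) * vθ t) t :=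
    (Real.hasDerivAt_cos (θ t)).comp t (hθ t)
  have hd1 : HasDerivAt (fun s =>
      Real.sin (θ s) ^ 2 * C1 (x s, y s)
        - Real.sin (θ s) * Real.cos (θ s) * C2 (x s, y s))
      ((2 * Real.sin (θ t) ^ 1 * (Real.cos (θ t) * vθ t)) * C1 (x t, y t)
        + Real.sin (θ t) ^ 2 * a
        - ((Real.cos (θ t) * vθ t * Real.cos (θ t)
            + Real.sin (θ t) * (-Real.sin (θ t) * vθ t)) * C2 (x t, y t)
          + Real.sin (θ t) * Real.cos (θ t) * b)) t :=
    ((hsin.pow 2).mul hA).sub ((hsin.mul hcos).mul hB)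
  have hd2 : HasDerivAt (fun s =>
      -(Real.sin (θ s) * Real.cos (θ s)) * C1 (x s, y s)
        + Real.cos (θ s) ^ 2 * C2 (x s, y s))
      ((-(Real.cos (θ t) * vθ t * Real.cos (θ t)
            + Real.sin (θ t) * (-Real.sin (θ t) * vθ t))) * C1 (x t, y t)
        + (-(Real.sin (θ t) * Real.cos (θ t))) * a
        + ((2 * Real.cos (θ t) ^ 1 * (-Real.sin (θ t) * vθ t)) * C2 (x t, y t)
          + Real.cos (θ t) ^ 2 * b)) t :=
    (((hsin.mul hcos).neg).mul hA).add ((hcos.pow 2).mul hB)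
  have hφ : HasDerivAt (fun s =>
      Real.sin (θ s) * vx s - Real.cos (θ s) * vy s
        + Real.cos (θ s) * C2 (x s, y s) - Real.sin (θ s) * C1 (x s, y s))
      ((Real.cos (θ t) * vθ t * vx t
          + Real.sin (θ t) * ((u t * Real.sin (θ t) + W1 t) / m)
        - (-Real.sin (θ t) * vθ t * vy t
          + Real.cos (θ t) * ((-(u t * Real.cos (θ t)) + W2 t) / m))
        + (-Real.sin (θ t) * vθ t * C2 (x t, y t) + Real.cos (θ t) * b))
        - (Real.cos (θ t) * vθ t * C1 (x t, y t) + Real.sin (θ t) * a)) t :=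
    (((hsin.mul (hax t)).sub (hcos.mul (hay t))).add (hcos.mul hB)).sub (hsin.mul hA)
  have e1 : (u t * Real.sin (θ t) + W1 t) / m
      = -(vθ t * (Real.cos (θ t) * vx t + Real.sin (θ t) * vy t)) * Real.sin (θ t)
        + (2 * Real.sin (θ t) ^ 1 * (Real.cos (θ t) * vθ t) * C1 (x t, y t)
          + Real.sin (θ t) ^ 2 * a
          - ((Real.cos (θ t) * vθ t * Real.cos (θ t)
              + Real.sin (θ t) * (-Real.sin (θ t) * vθ t)) * C2 (x t, y t)
            + Real.sin (θ t) * Real.cos (θ t) * b)) := by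
    rw [hu, hW1, hd1.deriv]
    field_simp
  have e2 : (-(u t * Real.cos (θ t)) + W2 t) / m
      = vθ t * (Real.cos (θ t) * vx t + Real.sin (θ t) * vy t) * Real.cos (θ t)
        + (-(Real.cos (θ t) * vθ t * Real.cos (θ t)
              + Real.sin (θ t) * (-Real.sin (θ t) * vθ t)) * C1 (x t, y t)
          + -(Real.sin (θ t) * Real.cos (θ t)) * a
          + (2 * Real.cos (θ t) ^ 1 * (-Real.sin (θ t) * vθ t) * C2 (x t, y t)
            + Real.cos (θ t) ^ 2 * b)) := by
    rw [hu, hW2, hd2.deriv]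
    field_simp
  convert hφ using 1
  rw [e1, e2]
  have hpc : Real.sin (θ t) ^ 2 + Real.cos (θ t) ^ 2 = 1 :=
    Real.sin_sq_add_cos_sq (θ t)
  linear_combination (Real.cos (θ t) * b - Real.sin (θ t) * a
    - Real.cos (θ t) * vθ t * C1 (x t, y t)
    + Real.sin (θ t) * vθ t * C2 (x t, y t)
    + Real.cos (θ t) * vθ t * vx t + Real.sin (θ t) * vθ t * vy t
    - 2 * Real.sin (θ t) * vθ t * C2 (x t, y t)) * hpc
end
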